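/- Let M be a real m×s matrix with full column rank s such that D = M Mᵀ is a diagonal matrix. Then exactly s diagonal entries of D are nonzero, say d_{n_1}, …, d_{n_s} in rows n_1 < ⋯ < n_s; a row M_{i,•} of M is nonzero if and only if i ∈ {n_1, …, n_s}; and the s×s submatrix M_0 of M formed by rows n_1, …, n_s satisfies M_0 = D_0 Q, where D_0 = diag(√d_{n_1}, …, √d_{n_s}) and Q is an s×s orthogonal matrix. -/

import Mathlib

open Matrix

/-- Properties of spurious factor loading matrices: if `M` is an `m × s` real
matrix of full column rank `s` such that `D = M Mᵀ` is diagonal, then exactly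
`s` diagonal entries of `D` are nonzero, located in rows `n 0 < ... < n (s-1)`;
a row of `M` is nonzero iff its index is one of the `n j`; and the `s × s`
submatrix `M₀` of the rows `n j` satisfies `M₀ = D₀ Q` with
`D₀ = diag(√(D (n j) (n j)))` and `Q` orthogonal. -/
theorem spurious_factor_matrix_structure {m s : ℕ}
    (M : Matrix (Fin m) (Fin s) ℝ) (hrank : M.rank = s)
    (hdiag : (M * Mᵀ).IsDiag) :
    ∃ n : Fin s → Fin m, StrictMono n ∧
      (∀ i : Fin m, (M * Mᵀ) i i ≠ 0 ↔ ∃ j : Fin s, n j = i) ∧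
      (∀ i : Fin m, (∃ j : Fin s, M i j ≠ 0) ↔ ∃ j : Fin s, n j = i) ∧
      ∃ Q : Matrix (Fin s) (Fin s) ℝ, Q * Qᵀ = 1 ∧
        M.submatrix n id =
          Matrix.diagonal (fun j : Fin s => Real.sqrt ((M * Mᵀ) (n j) (n j))) * Q := by
  classical
  set d : Fin m → ℝ := fun i => (M * Mᵀ) i i with hd
  -- entries of M * Mᵀ
  have hentry : ∀ i k : Fin m, (M * Mᵀ) i k = ∑ j, M i j * M k j := by
    intro i k
    simp [Matrix.mul_apply, Matrix.transpose_apply]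
  have hdd : ∀ i, d i = ∑ j, M i j * M i j := fun i => hentry i i
  have hdnonneg : ∀ i, 0 ≤ d i := by
    intro i
    rw [hdd]
    exact Finset.sum_nonneg fun j _ => mul_self_nonneg _
  -- M * Mᵀ is the diagonal matrix of d
  have hMMT : M * Mᵀ = Matrix.diagonal d := (hdiag.diagonal_diag).symm
  -- cardinality of nonzero diagonal entries
  have hcard : Fintype.card {i // d i ≠ 0} = s := by
    have h1 : (M * Mᵀ).rank = s := by rw [Matrix.rank_self_mul_transpose, hrank]
    rw [hMMT, Matrix.rank_diagonal] at h1
    exact h1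
  set S : Finset (Fin m) := Finset.univ.filter (fun i => d i ≠ 0) with hS
  have hScard : S.card = s := by
    rw [hS, ← hcard]
    simp [Fintype.card_subtype]
  set n : Fin s → Fin m := fun j => S.orderEmbOfFin hScard j with hn
  have hmono : StrictMono n := (S.orderEmbOfFin hScard).strictMono
  have hmem : ∀ i : Fin m, i ∈ S ↔ ∃ j : Fin s, n j = i := by
    intro i
    constructor
    · intro hi
      have : i ∈ Set.range (S.orderEmbOfFin hScard) := by
        rw [Finset.range_orderEmbOfFin]; exact hi
      obtain ⟨j, hj⟩ := this
      exact ⟨j, hj⟩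
    · rintro ⟨j, rfl⟩
      exact S.orderEmbOfFin_mem hScard j
  have hiffd : ∀ i : Fin m, d i ≠ 0 ↔ ∃ j : Fin s, n j = i := by
    intro i
    rw [← hmem i, hS]
    simp
  have hdn : ∀ j : Fin s, d (n j) ≠ 0 := fun j => (hiffd (n j)).mpr ⟨j, rfl⟩
  have hdnpos : ∀ j : Fin s, 0 < d (n j) := fun j => (hdnonneg (n j)).lt_of_ne' (hdn j)
  have hsqrt : ∀ j : Fin s, Real.sqrt (d (n j)) ≠ 0 := fun j =>
    ne_of_gt (Real.sqrt_pos.mpr (hdnpos j))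
  refine ⟨n, hmono, fun i => hiffd i, ?_, ?_⟩
  · intro i
    rw [← hiffd i]
    constructor
    · rintro ⟨j, hj⟩ h0
      have : (∑ k, M i k * M i k) = 0 := by rw [← hdd]; exact h0
      have := (Finset.sum_eq_zero_iff_of_nonneg
        (fun k _ => mul_self_nonneg (M i k))).mp this j (Finset.mem_univ j)
      exact hj (mul_self_eq_zero.mp this)
    · intro hdi
      by_contra h
      push_neg at h
      apply hdi
      rw [hdd]
      exact Finset.sum_eq_zero fun k _ => by rw [h k, mul_zero]
  · refine ⟨Matrix.of fun i j => M (n i) j / Real.sqrt (d (n i)), ?_, ?_⟩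
    · ext i k
      have hik : (∑ j, (M (n i) j / Real.sqrt (d (n i))) * (M (n k) j / Real.sqrt (d (n k))))
          = (M * Mᵀ) (n i) (n k) / (Real.sqrt (d (n i)) * Real.sqrt (d (n k))) := by
        rw [hentry, Finset.sum_div]
        exact Finset.sum_congr rfl fun j _ => by ring
      by_cases h : i = k
      · subst h
        simp only [Matrix.mul_apply, Matrix.transpose_apply, Matrix.of_apply, Matrix.one_apply_eq]
        rw [show (∑ j, (M (n i) j / Real.sqrt (d (n i))) * (M (n i) j / Real.sqrt (d (n i))))
            = (M * Mᵀ) (n i) (n i) / (Real.sqrt (d (n i)) * Real.sqrt (d (n i))) from hik,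
          Real.mul_self_sqrt (hdnonneg (n i))]
        exact div_self (hdn i)
      · have hne : n i ≠ n k := fun hc => h (hmono.injective hc)
        have h0 : (M * Mᵀ) (n i) (n k) = 0 := hdiag hne
        simp only [Matrix.mul_apply, Matrix.transpose_apply, Matrix.of_apply, Matrix.one_apply_ne h]
        rw [show (∑ j, (M (n i) j / Real.sqrt (d (n i))) * (M (n k) j / Real.sqrt (d (n k))))
            = (M * Mᵀ) (n i) (n k) / (Real.sqrt (d (n i)) * Real.sqrt (d (n k))) from hik,
          h0, zero_div]
    · ext i j
      rw [Matrix.mul_apply]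
      rw [Finset.sum_eq_single i (fun b _ hb => by
        rw [Matrix.diagonal_apply_ne _ (Ne.symm hb), zero_mul])
        (fun h => absurd (Finset.mem_univ i) h)]
      simp only [Matrix.diagonal_apply_eq, Matrix.submatrix_apply, id]
      show M (n i) j = Real.sqrt (d (n i)) * (M (n i) j / Real.sqrt (d (n i)))
      rw [mul_div_cancel₀ _ (hsqrt i)]
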